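/- Let (u, v) and (u′, v′) be two pairs of vectors in ℝⁿ with max{‖u − u′‖∞, ‖v − v′‖∞} = Δ satisfying Δ ≤ η/8. Then |x(u,v) − x(u′,v′)| ≤ (3/η)·Δ·min{x(u,v), x(u′,v′)}. -/

import Mathlib

/-- If `max{‖u − u'‖∞, ‖v − v'‖∞} = Δ ≤ η/8`, then
`|x(u,v) − x(u',v')| ≤ (3/η)·Δ·min{x(u,v), x(u',v')}`,
where `x(u,v) = Σᵢⱼ exp((uᵢ + vⱼ − Cᵢⱼ)/η)`. -/
theorem stmt_14 {n : ℕ} (hn : 2 ≤ n)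
    (C : Fin n → Fin n → ℝ) (hC : ∀ i j, 0 ≤ C i j)
    (η : ℝ) (hη : 0 < η) (u v u' v' : Fin n → ℝ) (Δ : ℝ)
    (hΔ : max ‖u - u'‖ ‖v - v'‖ = Δ) (hΔη : Δ ≤ η / 8) :
    |(∑ i, ∑ j, Real.exp ((u i + v j - C i j) / η))
        - ∑ i, ∑ j, Real.exp ((u' i + v' j - C i j) / η)|
      ≤ (3 / η) * Δ *
        min (∑ i, ∑ j, Real.exp ((u i + v j - C i j) / η))
          (∑ i, ∑ j, Real.exp ((u' i + v' j - C i j) / η)) := by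
  have hΔ0 : 0 ≤ Δ := hΔ ▸ le_max_of_le_left (norm_nonneg _)
  have hu : ∀ i, |u i - u' i| ≤ Δ := fun i => by
    have h1 := norm_le_pi_norm (u - u') i
    simp only [Pi.sub_apply, Real.norm_eq_abs] at h1
    exact h1.trans (hΔ ▸ le_max_left _ _)
  have hv : ∀ j, |v j - v' j| ≤ Δ := fun j => by
    have h1 := norm_le_pi_norm (v - v') j
    simp only [Pi.sub_apply, Real.norm_eq_abs] at h1
    exact h1.trans (hΔ ▸ le_max_right _ _)
  have key : ∀ w z w' z' : Fin n → ℝ, (∀ i, |w i - w' i| ≤ Δ) →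
      (∀ j, |z j - z' j| ≤ Δ) →
      (∑ i, ∑ j, Real.exp ((w i + z j - C i j) / η))
        ≤ Real.exp (2 * Δ / η) * ∑ i, ∑ j, Real.exp ((w' i + z' j - C i j) / η) := by
    intro w z w' z' hw hz
    rw [Finset.mul_sum]
    refine Finset.sum_le_sum fun i _ => ?_
    rw [Finset.mul_sum]
    refine Finset.sum_le_sum fun j _ => ?_
    rw [← Real.exp_add]
    apply Real.exp_le_exp.mpr
    rw [← add_div, div_le_div_iff_of_pos_right hη]
    have h1 := abs_le.mp (hw i)
    have h2 := abs_le.mp (hz j)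
    linarith [h1.1, h1.2, h2.1, h2.2]
  set S := ∑ i, ∑ j, Real.exp ((u i + v j - C i j) / η) with hS
  set S' := ∑ i, ∑ j, Real.exp ((u' i + v' j - C i j) / η) with hS'
  have h1 : S ≤ Real.exp (2 * Δ / η) * S' := key u v u' v' hu hv
  have h2 : S' ≤ Real.exp (2 * Δ / η) * S := key u' v' u v
    (fun i => by rw [abs_sub_comm]; exact hu i)
    (fun j => by rw [abs_sub_comm]; exact hv j)
  have hnpos : 0 < n := by omega
  haveI : Nonempty (Fin n) := ⟨⟨0, hnpos⟩⟩
  have hSpos : 0 < S := Finset.sum_pos (fun i _ => Finset.sum_pos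
    (fun j _ => Real.exp_pos _) Finset.univ_nonempty) Finset.univ_nonempty
  have hS'pos : 0 < S' := Finset.sum_pos (fun i _ => Finset.sum_pos
    (fun j _ => Real.exp_pos _) Finset.univ_nonempty) Finset.univ_nonempty
  -- bound on exp(2Δ/η) - 1
  have ht0 : 0 ≤ 2 * Δ / η := by positivity
  have ht : 2 * Δ / η ≤ 1 / 4 := by rw [div_le_iff₀ hη]; linarith
  have hpos := Real.exp_pos (2 * Δ / η)
  have h3 := Real.add_one_le_exp (-(2 * Δ / η))
  have h5 : (1 - 2 * Δ / η) * Real.exp (2 * Δ / η) ≤ 1 := by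
    have := mul_le_mul_of_nonneg_right h3 hpos.le
    rw [← Real.exp_add, neg_add_cancel, Real.exp_zero] at this
    linarith
  have hE : Real.exp (2 * Δ / η) - 1 ≤ 3 / η * Δ := by
    have hgoal : Real.exp (2 * Δ / η) - 1 ≤ 3 / 2 * (2 * Δ / η) := by
      nlinarith [h5, ht, ht0, hpos]
    calc Real.exp (2 * Δ / η) - 1 ≤ 3 / 2 * (2 * Δ / η) := hgoal
      _ = 3 / η * Δ := by field_simp
  have hK : 0 ≤ 3 / η * Δ := by positivity
  rw [abs_sub_le_iff]
  constructor
  · rcases le_total S S' with h | h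
    · have : 0 ≤ 3 / η * Δ * min S S' := by positivity
      linarith
    · rw [min_eq_right h]
      nlinarith [h1, hE, hS'pos]
  · rcases le_total S' S with h | h
    · have : 0 ≤ 3 / η * Δ * min S S' := by positivity
      linarith
    · rw [min_eq_left h]
      nlinarith [h2, hE, hSpos]
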